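/- Let d ≥ 1 and m > d be integers, let Γ ⊂ ℝ^m be a compact smooth d-dimensional embedded submanifold of ℝ^m, let μ be the d-dimensional Hausdorff measure restricted to Γ, and let f ∈ L²(Γ, μ). Then for every δ > 0 there exists a depth-4 ReLU network f_N : ℝ^m → ℝ such that ∫_Γ |f(x) − f_N(x)|² dμ(x) ≤ δ. -/

import Mathlib

open MeasureTheory Manifold
open scoped ENNReal NNReal

/-- A depth-4 network with ReLU activations: `f_N = A₄ ∘ σ ∘ A₃ ∘ σ ∘ A₂ ∘ A₁` where the `Aᵢ`
are affine maps and `σ` is the coordinatewise rectifier `rect(x) = max{0,x}`. -/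
def IsDepth4ReLUNet {m : ℕ} (F : EuclideanSpace ℝ (Fin m) → ℝ) : Prop :=
  ∃ (n1 n2 n3 : ℕ) (W1 : Matrix (Fin n1) (Fin m) ℝ) (c1 : Fin n1 → ℝ)
    (W2 : Matrix (Fin n2) (Fin n1) ℝ) (c2 : Fin n2 → ℝ)
    (W3 : Matrix (Fin n3) (Fin n2) ℝ) (c3 : Fin n3 → ℝ)
    (w : Fin n3 → ℝ) (c4 : ℝ),
    ∀ x : EuclideanSpace ℝ (Fin m),
      F x = (∑ i : Fin n3,
          w i * max 0 ((W3.mulVec (fun j : Fin n2 =>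
            max 0 ((W2.mulVec (W1.mulVec x + c1) + c2) j)) + c3) i)) + c4

noncomputable def s0clamp (t : ℝ) : ℝ := max 0 t - max 0 (t - 1)

lemma s0clamp_nonneg (t : ℝ) : 0 ≤ s0clamp t := by
  have : max 0 (t - 1) ≤ max 0 t := max_le_max le_rfl (by linarith)
  simp only [s0clamp]; linarith

lemma s0clamp_le_one (t : ℝ) : s0clamp t ≤ 1 := by
  rcases le_total t 1 with h | h
  · have h1 : max 0 (t - 1) = 0 := max_eq_left (by linarith)
    have h2 : max 0 t ≤ 1 := max_le zero_le_one h
    simp only [s0clamp]; linarith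
  · have h1 : max 0 (t - 1) = t - 1 := max_eq_right (by linarith)
    have h2 : max 0 t = t := max_eq_right (by linarith)
    simp only [s0clamp]; linarith

lemma s0clamp_eq_zero {t : ℝ} (h : t ≤ 0) : s0clamp t = 0 := by
  simp only [s0clamp, max_eq_left h, max_eq_left (by linarith : t - 1 ≤ 0), sub_zero]

lemma s0clamp_eq_one {t : ℝ} (h : 1 ≤ t) : s0clamp t = 1 := by
  simp only [s0clamp, max_eq_right (by linarith : (0:ℝ) ≤ t),
    max_eq_right (by linarith : (0:ℝ) ≤ t - 1)]; ring

/-- soft indicator of the cube `[a, a+h]^m`, sharpness `s`. -/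
noncomputable def s0bump (m : ℕ) (s h : ℝ) (a : Fin m → ℝ) (x : Fin m → ℝ) : ℝ :=
  max 0 (∑ i, (s0clamp (s * (x i - a i)) + s0clamp (s * (a i + h - x i)) - 1) - ((m : ℝ) - 1))

lemma s0bump_nonneg (m : ℕ) (s h : ℝ) (a x : Fin m → ℝ) : 0 ≤ s0bump m s h a x :=
  le_max_left _ _

lemma s0bump_le_one (m : ℕ) (s h : ℝ) (a x : Fin m → ℝ) : s0bump m s h a x ≤ 1 := by
  refine max_le zero_le_one ?_
  have hsum : (∑ i, (s0clamp (s * (x i - a i)) + s0clamp (s * (a i + h - x i)) - 1)) ≤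
      ∑ _i : Fin m, (1 : ℝ) := by
    refine Finset.sum_le_sum fun i _ => ?_
    have := s0clamp_le_one (s * (x i - a i))
    have := s0clamp_le_one (s * (a i + h - x i))
    linarith
  simp only [Finset.sum_const, Finset.card_univ, Fintype.card_fin, nsmul_eq_mul, mul_one] at hsum
  linarith

lemma s0bump_eq_one {m : ℕ} {s h : ℝ} (hs : 0 < s) {a x : Fin m → ℝ}
    (hx : ∀ i, a i + 1 / s ≤ x i ∧ x i ≤ a i + h - 1 / s) : s0bump m s h a x = 1 := by
  have hterm : ∀ i : Fin m,
      s0clamp (s * (x i - a i)) + s0clamp (s * (a i + h - x i)) - 1 = 1 := by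
    intro i
    have h1 : (1 : ℝ) ≤ s * (x i - a i) := by
      have := (hx i).1
      rw [show (1:ℝ) = s * (1 / s) by field_simp]
      exact mul_le_mul_of_nonneg_left (by linarith) hs.le
    have h2 : (1 : ℝ) ≤ s * (a i + h - x i) := by
      have := (hx i).2
      rw [show (1:ℝ) = s * (1 / s) by field_simp]
      exact mul_le_mul_of_nonneg_left (by linarith) hs.le
    rw [s0clamp_eq_one h1, s0clamp_eq_one h2]; ring
  simp only [s0bump]
  rw [Finset.sum_congr rfl fun i _ => hterm i]
  simp only [Finset.sum_const, Finset.card_univ, Fintype.card_fin, nsmul_eq_mul, mul_one]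
  rw [max_eq_right] <;> linarith

lemma s0bump_eq_zero {m : ℕ} {s h : ℝ} (hs : 0 ≤ s) {a x : Fin m → ℝ} {i : Fin m}
    (hi : x i ≤ a i ∨ a i + h ≤ x i) : s0bump m s h a x = 0 := by
  have hterm : s0clamp (s * (x i - a i)) + s0clamp (s * (a i + h - x i)) - 1 ≤ 0 := by
    rcases hi with hle | hge
    · rw [s0clamp_eq_zero (mul_nonpos_of_nonneg_of_nonpos hs (by linarith))]
      have := s0clamp_le_one (s * (a i + h - x i)); linarith
    · rw [s0clamp_eq_zero (t := s * (a i + h - x i))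
        (mul_nonpos_of_nonneg_of_nonpos hs (by linarith))]
      have := s0clamp_le_one (s * (x i - a i)); linarith
  have hsum : (∑ j, (s0clamp (s * (x j - a j)) + s0clamp (s * (a j + h - x j)) - 1)) ≤
      ((m : ℝ) - 1) := by
    classical
    calc (∑ j, (s0clamp (s * (x j - a j)) + s0clamp (s * (a j + h - x j)) - 1))
        ≤ ∑ j, (if j = i then (0:ℝ) else 1) := by
          refine Finset.sum_le_sum fun j _ => ?_
          by_cases hj : j = i
          · subst hj; simp [hterm]
          · simp only [hj, if_false]
            have := s0clamp_le_one (s * (x j - a j))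
            have := s0clamp_le_one (s * (a j + h - x j))
            linarith
      _ ≤ (m : ℝ) - 1 := by
          have : ∀ j : Fin m, (if j = i then (0:ℝ) else 1) = 1 - (if j = i then 1 else 0) := by
            intro j; by_cases hj : j = i <;> simp [hj]
          rw [Finset.sum_congr rfl fun j _ => this j, Finset.sum_sub_distrib,
            Finset.sum_ite_eq' Finset.univ i (fun _ => (1:ℝ))]
          simp [Finset.sum_const]
  simp only [s0bump]
  rw [max_eq_left (by linarith)]

lemma s0_isNet {m : ℕ} {ι : Type} [Fintype ι] (s h : ℝ) (a : ι → Fin m → ℝ) (w : ι → ℝ) :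
    IsDepth4ReLUNet (fun x => ∑ p : ι, w p * s0bump m s h (a p) x) := by
  classical
  set κ := (ι × Fin m × Bool × Bool) with hκ
  let E2 : Fin (Fintype.card κ) ≃ κ := (Fintype.equivFin κ).symm
  let E3 : Fin (Fintype.card ι) ≃ ι := (Fintype.equivFin ι).symm
  let row : κ → Fin m → ℝ := fun k l => if l = k.2.1 then (if k.2.2.1 then -s else s) else 0
  let off : κ → ℝ := fun k =>
    (if k.2.2.1 then s * (a k.1 k.2.1 + h) else -(s * a k.1 k.2.1)) - (if k.2.2.2 then 1 else 0)
  let sgn : κ → ℝ := fun k => if k.2.2.2 then -1 else 1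
  let uval : κ → (Fin m → ℝ) → ℝ := fun k x =>
    (if k.2.2.1 then s * (a k.1 k.2.1 + h - x k.2.1) else s * (x k.2.1 - a k.1 k.2.1))
      - (if k.2.2.2 then 1 else 0)
  refine ⟨m, Fintype.card κ, Fintype.card ι, 1, 0,
    Matrix.of (fun j l => row (E2 j) l), fun j => off (E2 j),
    Matrix.of (fun q j => if (E2 j).1 = E3 q then sgn (E2 j) else 0),
    fun _ => -(2 * (m : ℝ) - 1), fun q => w (E3 q), 0, ?_⟩
  intro x
  have hx1 : (1 : Matrix (Fin m) (Fin m) ℝ).mulVec x + (0 : Fin m → ℝ) = (x : Fin m → ℝ) := by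
    simp [Matrix.one_mulVec]
  rw [hx1]
  have hrow : ∀ k : κ, (∑ l, row k l * (x : Fin m → ℝ) l) + off k = uval k x := by
    rintro ⟨p, i, b1, b2⟩
    simp only [row, off, uval, ite_mul, zero_mul]
    rw [Finset.sum_ite_eq' Finset.univ i
      (fun l => if b1 = true then -s * (x : Fin m → ℝ) l else s * (x : Fin m → ℝ) l)]
    simp only [Finset.mem_univ, if_true]
    cases b1 <;> cases b2 <;> simp <;> ring
  have hA : ∀ j, (Matrix.of (fun j l => row (E2 j) l)).mulVec (x : Fin m → ℝ) j + off (E2 j)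
      = uval (E2 j) x := by
    intro j
    simpa [Matrix.mulVec, dotProduct] using hrow (E2 j)
  have hclamp : ∀ p : ι, ∀ i : Fin m,
      (∑ b1 : Bool, ∑ b2 : Bool, sgn (p, i, b1, b2) * max 0 (uval (p, i, b1, b2) x)) =
      s0clamp (s * ((x : Fin m → ℝ) i - a p i))
        + s0clamp (s * (a p i + h - (x : Fin m → ℝ) i)) := by
    intro p i
    simp only [Fintype.sum_bool, sgn, uval, s0clamp]
    norm_num
    ring
  have hB : ∀ q : Fin (Fintype.card ι),
      ((Matrix.of (fun q j => if (E2 j).1 = E3 q then sgn (E2 j) else 0)).mulVec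
        (fun j => max 0 ((Matrix.of (fun j l => row (E2 j) l)).mulVec (x : Fin m → ℝ) j
          + off (E2 j)))) q
      = ∑ i : Fin m, (s0clamp (s * ((x : Fin m → ℝ) i - a (E3 q) i))
          + s0clamp (s * (a (E3 q) i + h - (x : Fin m → ℝ) i))) := by
    intro q
    simp only [Matrix.mulVec, dotProduct, Matrix.of_apply]
    calc (∑ j, (if (E2 j).1 = E3 q then sgn (E2 j) else 0) *
            max 0 ((Matrix.of (fun j l => row (E2 j) l)).mulVec (x : Fin m → ℝ) j + off (E2 j)))
        = ∑ j, (if (E2 j).1 = E3 q then sgn (E2 j) else 0) * max 0 (uval (E2 j) x) := by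
          refine Finset.sum_congr rfl fun j _ => ?_
          rw [hA j]
      _ = ∑ k : κ, (if k.1 = E3 q then sgn k else 0) * max 0 (uval k x) :=
          Equiv.sum_comp E2 (fun k => (if k.1 = E3 q then sgn k else 0) * max 0 (uval k x))
      _ = ∑ p : ι, ∑ i : Fin m, ∑ b1 : Bool, ∑ b2 : Bool,
            (if p = E3 q then sgn (p, i, b1, b2) else 0) * max 0 (uval (p, i, b1, b2) x) := by
          rw [Fintype.sum_prod_type]
          exact Finset.sum_congr rfl fun p _ => by
            rw [Fintype.sum_prod_type]
            exact Finset.sum_congr rfl fun i _ => by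
              rw [Fintype.sum_prod_type]
      _ = ∑ i : Fin m, ∑ b1 : Bool, ∑ b2 : Bool,
            sgn (E3 q, i, b1, b2) * max 0 (uval (E3 q, i, b1, b2) x) := by
          rw [Finset.sum_eq_single (E3 q)]
          · simp
          · intro p _ hp
            refine Finset.sum_eq_zero fun i _ => Finset.sum_eq_zero fun b1 _ =>
              Finset.sum_eq_zero fun b2 _ => ?_
            rw [if_neg hp, zero_mul]
          · intro hmem; exact absurd (Finset.mem_univ _) hmem
      _ = _ := Finset.sum_congr rfl fun i _ => hclamp (E3 q) i
  calc ∑ p : ι, w p * s0bump m s h (a p) x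
      = ∑ q : Fin (Fintype.card ι), w (E3 q) * s0bump m s h (a (E3 q)) x :=
        (Equiv.sum_comp E3 (fun p => w p * s0bump m s h (a p) x)).symm
    _ = _ := by
        rw [add_zero]
        refine Finset.sum_congr rfl fun q _ => ?_
        simp only [Pi.add_apply]
        rw [hB q]
        congr 1
        simp only [s0bump]
        congr 1
        rw [Finset.sum_sub_distrib]
        simp only [Finset.sum_const, Finset.card_univ, Fintype.card_fin, nsmul_eq_mul, mul_one]
        ring


lemma s0_hausdorff_finite {d m : ℕ}
    (M : Type) [TopologicalSpace M] [ChartedSpace (EuclideanSpace ℝ (Fin d)) M]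
    [IsManifold (𝓡 d) (⊤ : ℕ∞) M] [CompactSpace M]
    (e : M → EuclideanSpace ℝ (Fin m))
    (he : ContMDiff (𝓡 d) 𝓘(ℝ, EuclideanSpace ℝ (Fin m)) (⊤ : ℕ∞) e) :
    μH[(d : ℝ)] (Set.range e) < ⊤ := by
  haveI inst1 : Measure.IsAddHaarMeasure (μH[(d:ℝ)] : Measure (EuclideanSpace ℝ (Fin d))) := by
    have h := isAddHaarMeasure_hausdorffMeasure (E := EuclideanSpace ℝ (Fin d))
    rwa [finrank_euclideanSpace_fin] at h
  have key : ∀ p : M, ∃ U : Set M, IsOpen U ∧ p ∈ U ∧ μH[(d:ℝ)] (e '' U) < ⊤ := by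
    intro p
    have h1 : ContMDiffAt (𝓡 d) 𝓘(ℝ, EuclideanSpace ℝ (Fin m)) 1 e p :=
      (he p).of_le (by exact_mod_cast (le_top : (1:ℕ∞) ≤ ⊤))
    rw [contMDiffAt_iff] at h1
    obtain ⟨hc, hd2⟩ := h1
    set φ := extChartAt (𝓡 d) p with hφ
    have hd3 : ContDiffAt ℝ 1 (e ∘ φ.symm) (φ p) := by
      simp only [extChartAt_model_space_eq_id, PartialEquiv.refl_coe, Function.id_comp,
        modelWithCornersSelf_coe, Set.range_id] at hd2
      rwa [contDiffWithinAt_univ] at hd2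
    obtain ⟨K, t, ht, hlip⟩ := hd3.exists_lipschitzOnWith
    obtain ⟨r, hr, hball⟩ := Metric.mem_nhds_iff.1 ht
    refine ⟨φ.source ∩ φ ⁻¹' Metric.ball (φ p) (r/2), ?_, ?_, ?_⟩
    · exact (continuousOn_extChartAt _).isOpen_inter_preimage (isOpen_extChartAt_source _)
        Metric.isOpen_ball
    · exact ⟨mem_extChartAt_source _, by simp [Metric.mem_ball, half_pos hr]⟩
    · have himg : e '' (φ.source ∩ φ ⁻¹' Metric.ball (φ p) (r/2)) ⊆
          (e ∘ φ.symm) '' (Metric.closedBall (φ p) (r/2)) := by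
        rintro _ ⟨q, ⟨hq1, hq2⟩, rfl⟩
        exact ⟨φ q, Metric.ball_subset_closedBall hq2,
          by simp [Function.comp, φ.left_inv hq1]⟩
      have hsub : Metric.closedBall (φ p) (r/2) ⊆ t :=
        (Metric.closedBall_subset_ball (by linarith)).trans hball
      calc μH[(d:ℝ)] (e '' (φ.source ∩ φ ⁻¹' Metric.ball (φ p) (r/2)))
          ≤ μH[(d:ℝ)] ((e ∘ φ.symm) '' (Metric.closedBall (φ p) (r/2))) := measure_mono himg
        _ ≤ (K : ℝ≥0∞) ^ (d:ℝ) * μH[(d:ℝ)] (Metric.closedBall (φ p) (r/2)) :=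
            (hlip.mono hsub).hausdorffMeasure_image_le (by positivity)
        _ < ⊤ := ENNReal.mul_lt_top
            (ENNReal.rpow_lt_top_of_nonneg (by positivity) ENNReal.coe_ne_top)
            (isCompact_closedBall _ _).measure_lt_top
  choose U hUopen hUmem hUfin using key
  obtain ⟨t, ht⟩ := isCompact_univ.elim_finite_subcover U hUopen
    (fun q _ => Set.mem_iUnion.2 ⟨q, hUmem q⟩)
  have hsub : Set.range e ⊆ ⋃ p ∈ t, e '' U p := by
    rintro _ ⟨q, rfl⟩
    obtain ⟨p, hp, hq⟩ : ∃ p ∈ t, q ∈ U p := by simpa using ht (Set.mem_univ q)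
    exact Set.mem_biUnion hp ⟨q, hq, rfl⟩
  calc μH[(d:ℝ)] (Set.range e) ≤ ∑ p ∈ t, μH[(d:ℝ)] (e '' U p) :=
        (measure_mono hsub).trans (measure_biUnion_finset_le t _)
    _ < ⊤ := ENNReal.sum_lt_top.2 fun p _ => hUfin p


lemma s0_abs_coord_le {m : ℕ} (x : EuclideanSpace ℝ (Fin m)) (i : Fin m) : |x i| ≤ ‖x‖ := by
  rw [EuclideanSpace.norm_eq]
  have h1 : |x i| = Real.sqrt (|x i| ^ 2) := by
    rw [Real.sqrt_sq_eq_abs, abs_abs]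
  rw [h1]
  apply Real.sqrt_le_sqrt
  exact Finset.single_le_sum (f := fun j => ‖x j‖ ^ 2)
    (fun j _ => by positivity) (Finset.mem_univ i) |>.trans_eq' (by rw [Real.norm_eq_abs])

lemma s0_norm_le {m : ℕ} (x : EuclideanSpace ℝ (Fin m)) {c : ℝ} (hc : 0 ≤ c)
    (hx : ∀ i, |x i| ≤ c) : ‖x‖ ≤ (m + 1) * c := by
  rw [EuclideanSpace.norm_eq]
  have h1 : ∑ i, ‖x i‖ ^ 2 ≤ ((m : ℝ) + 1) ^ 2 * c ^ 2 := by
    calc ∑ i, ‖x i‖ ^ 2 ≤ ∑ _i : Fin m, c ^ 2 := by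
          refine Finset.sum_le_sum fun i _ => ?_
          rw [Real.norm_eq_abs]
          exact pow_le_pow_left₀ (abs_nonneg _) (hx i) 2
      _ = (m : ℝ) * c ^ 2 := by simp [Finset.sum_const, mul_comm]
      _ ≤ ((m : ℝ) + 1) ^ 2 * c ^ 2 := by
          have hm : (0:ℝ) ≤ (m:ℝ) := Nat.cast_nonneg m
          nlinarith [mul_nonneg hm (sq_nonneg c), mul_nonneg (mul_nonneg hm hm) (sq_nonneg c), sq_nonneg c]
  calc Real.sqrt (∑ i, ‖x i‖ ^ 2) ≤ Real.sqrt (((m : ℝ) + 1) ^ 2 * c ^ 2) :=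
        Real.sqrt_le_sqrt h1
    _ = ((m : ℝ) + 1) * c := by
        rw [show ((m : ℝ) + 1) ^ 2 * c ^ 2 = (((m : ℝ) + 1) * c) ^ 2 by ring,
          Real.sqrt_sq (by positivity)]


set_option maxHeartbeats 2000000 in
theorem statement0' (d m : ℕ) (hd : 1 ≤ d) (hdm : d < m)
    (M : Type) [TopologicalSpace M] [ChartedSpace (EuclideanSpace ℝ (Fin d)) M]
    [IsManifold (𝓡 d) (⊤ : ℕ∞) M] [CompactSpace M]
    (e : M → EuclideanSpace ℝ (Fin m))
    (he : ContMDiff (𝓡 d) 𝓘(ℝ, EuclideanSpace ℝ (Fin m)) (⊤ : ℕ∞) e)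
    (Γ : Set (EuclideanSpace ℝ (Fin m))) (hΓ : Γ = Set.range e)
    (μ : Measure (EuclideanSpace ℝ (Fin m))) (hμ : μ = μH[(d : ℝ)].restrict Γ)
    (f : EuclideanSpace ℝ (Fin m) → ℝ) (hf : MemLp f 2 μ)
    (δ : ℝ) (hδ : 0 < δ) :
    ∃ fN : EuclideanSpace ℝ (Fin m) → ℝ, IsDepth4ReLUNet fN ∧
      ∫ x, |f x - fN x| ^ 2 ∂μ ≤ δ := by
  classical
  subst hΓ
  subst hμ
  set ν := μH[(d:ℝ)].restrict (Set.range e) with hν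
  have hΓc : IsCompact (Set.range e) := isCompact_range he.continuous
  have hΓm : MeasurableSet (Set.range e) := hΓc.isClosed.measurableSet
  haveI hfin : IsFiniteMeasure ν := by
    constructor
    rw [hν, Measure.restrict_apply_univ]
    exact s0_hausdorff_finite M e he
  -- bound on the support
  obtain ⟨R0, hR0⟩ := (Metric.isBounded_iff_subset_closedBall
    (0 : EuclideanSpace ℝ (Fin m))).1 hΓc.isBounded
  set R := max R0 0 with hRdef
  have hRnn : (0:ℝ) ≤ R := le_max_right _ _
  have hcoord : ∀ x ∈ Set.range e, ∀ i, |x i| ≤ R := by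
    intro x hx i
    have h1 := hR0 hx
    rw [Metric.mem_closedBall, dist_zero_right] at h1
    exact (s0_abs_coord_le x i).trans (h1.trans (le_max_left _ _))
  have hnormΓ : ∀ x ∈ Set.range e, ‖x‖ ≤ R := by
    intro x hx
    have h1 := hR0 hx
    rw [Metric.mem_closedBall, dist_zero_right] at h1
    exact h1.trans (le_max_left _ _)
  -- continuous approximation
  have hpow : ∀ a : ℝ, ‖a‖ ^ (2:ℝ) = |a| ^ 2 := fun a => by
    rw [Real.norm_eq_abs, show (2:ℝ) = ((2:ℕ):ℝ) by norm_num, Real.rpow_natCast]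
  have hf2 : MemLp f (ENNReal.ofReal 2) ν := by rwa [ENNReal.ofReal_ofNat]
  obtain ⟨g, hg, hgmem⟩ := hf2.exists_boundedContinuous_integral_rpow_sub_le two_pos
    (show (0:ℝ) < δ/8 by linarith)
  have hgmem2 : MemLp (⇑g) 2 ν := by rwa [ENNReal.ofReal_ofNat] at hgmem
  have hg2 : ∫ x, |f x - g x| ^ 2 ∂ν ≤ δ/8 := by
    refine le_trans (le_of_eq ?_) hg
    exact integral_congr_ae (Filter.Eventually.of_forall fun x => (hpow (f x - g x)).symm)
  set W := ‖g‖ with hWdef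
  have hW0 : (0:ℝ) ≤ W := norm_nonneg _
  have hWb : ∀ x, |g x| ≤ W := fun x => by
    rw [← Real.norm_eq_abs]; exact g.norm_coe_le_norm x
  set T := (ν Set.univ).toReal with hTdef
  have hT0 : (0:ℝ) ≤ T := ENNReal.toReal_nonneg
  set ε' := Real.sqrt (δ/(8*(T+1))) with hε'def
  have hε' : 0 < ε' := Real.sqrt_pos.2 (by positivity)
  have hε'sq : ε'^2 = δ/(8*(T+1)) := Real.sq_sqrt (by positivity)
  have hε'T : ε'^2 * T ≤ δ/8 := by
    rw [hε'sq, div_mul_eq_mul_div, div_le_div_iff₀ (by positivity) (by norm_num)]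
    nlinarith
  -- uniform continuity on a big ball
  set D := Metric.closedBall (0 : EuclideanSpace ℝ (Fin m)) ((R+2)*(m+1)) with hDdef
  have hUC := (isCompact_closedBall (0 : EuclideanSpace ℝ (Fin m)) ((R+2)*(m+1))
    ).uniformContinuousOn_of_continuous (g.continuous.continuousOn)
  rw [Metric.uniformContinuousOn_iff] at hUC
  obtain ⟨δ₀, hδ₀, huc⟩ := hUC ε' hε'
  set h := min 1 (δ₀/(2*(m+1))) with hhdef
  have hh : 0 < h := lt_min one_pos (by positivity)
  have hh1 : h ≤ 1 := min_le_left _ _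
  have hh2 : h ≤ δ₀/(2*(m+1)) := min_le_right _ _
  -- choice of a grid offset avoiding atoms
  have hcnt : ∀ i : Fin m,
      Set.Countable {c : ℝ | 0 < ν {x : EuclideanSpace ℝ (Fin m) | x i = c}} := by
    intro i
    refine MeasureTheory.Measure.countable_meas_pos_of_disjoint_of_meas_iUnion_ne_top ν
      (fun c => ?_) (fun c c' hcc => ?_) (measure_ne_top _ _)
    · exact measurableSet_eq_fun ((EuclideanSpace.proj i).continuous.measurable) measurable_const
    · simp only [Function.onFun, Set.disjoint_left, Set.mem_setOf_eq]
      rintro x rfl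
      exact fun hx' => hcc hx'
  obtain ⟨o, ho⟩ : ∃ o : ℝ, o ∉ ⋃ i : Fin m, ⋃ k : ℤ,
      {c : ℝ | 0 < ν {x : EuclideanSpace ℝ (Fin m) | x i = c + (k:ℝ)*h}} := by
    by_contra hcon
    push_neg at hcon
    have hBadc : Set.Countable (⋃ i : Fin m, ⋃ k : ℤ,
        {c : ℝ | 0 < ν {x : EuclideanSpace ℝ (Fin m) | x i = c + (k:ℝ)*h}}) := by
      refine Set.countable_iUnion fun i => Set.countable_iUnion fun k => ?_
      have hiden : {c : ℝ | 0 < ν {x : EuclideanSpace ℝ (Fin m) | x i = c + (k:ℝ)*h}}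
          = (fun c : ℝ => c + (k:ℝ)*h) ⁻¹'
            {a : ℝ | 0 < ν {x : EuclideanSpace ℝ (Fin m) | x i = a}} := rfl
      rw [hiden]
      exact (hcnt i).preimage (fun a b hab => by simpa using hab)
    have hBu : (⋃ i : Fin m, ⋃ k : ℤ,
        {c : ℝ | 0 < ν {x : EuclideanSpace ℝ (Fin m) | x i = c + (k:ℝ)*h}})
        = Set.univ := Set.eq_univ_of_forall hcon
    rw [hBu] at hBadc
    exact Cardinal.not_countable_real hBadc
  have hnull : ∀ (i : Fin m) (k : ℤ),
      ν {x : EuclideanSpace ℝ (Fin m) | x i = o + (k:ℝ)*h} = 0 := by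
    intro i k
    by_contra hne
    exact ho (Set.mem_iUnion.2 ⟨i, Set.mem_iUnion.2 ⟨k, pos_iff_ne_zero.2 hne⟩⟩)
  -- size of the grid
  obtain ⟨K, hKprop⟩ : ∃ K : ℕ, ∀ v : ℝ, |v| ≤ R →
      (-(K:ℤ) ≤ ⌊(v - o)/h⌋ ∧ ⌊(v - o)/h⌋ ≤ (K:ℤ)) := by
    refine ⟨⌈(R + |o|)/h⌉₊ + 1, fun v hv => ?_⟩
    have habs : |(v - o)/h| ≤ (R + |o|)/h := by
      rw [abs_div, abs_of_pos hh]
      exact div_le_div_of_nonneg_right ((abs_sub v o).trans (by linarith)) hh.le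
    have hKge : (R + |o|)/h ≤ ((⌈(R + |o|)/h⌉₊ + 1 : ℕ) : ℝ) := by
      push_cast
      linarith [Nat.le_ceil ((R + |o|)/h)]
    constructor
    · apply Int.le_floor.2
      push_cast
      push_cast at hKge
      have := (abs_le.1 habs).1
      linarith
    · have h1 : ((⌊(v-o)/h⌋ : ℤ):ℝ) ≤ ((⌈(R + |o|)/h⌉₊ + 1 : ℕ) : ℝ) :=
        (Int.floor_le _).trans ((abs_le.1 habs).2.trans hKge)
      exact_mod_cast h1
  -- slabs around grid hyperplanes
  set B : ℕ → Set (EuclideanSpace ℝ (Fin m)) := fun n =>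
    ⋃ j : Fin m × {k : ℤ // k ∈ Finset.Icc (-(K:ℤ)-1) ((K:ℤ)+1)},
      {x | |x j.1 - (o + ((j.2 : ℤ):ℝ)*h)| ≤ 1/((n:ℝ)+1)} with hBdef
  have hBmeas : ∀ n, MeasurableSet (B n) := by
    intro n
    refine MeasurableSet.iUnion fun j => ?_
    have hc : Continuous fun x : EuclideanSpace ℝ (Fin m) =>
        |x j.1 - (o + ((j.2 : ℤ):ℝ)*h)| := ((EuclideanSpace.proj j.1).continuous.sub continuous_const).abs
    exact (isClosed_le hc continuous_const).measurableSet
  have hBanti : Antitone B := by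
    intro n n' hnn x hx
    obtain ⟨S, ⟨j, rfl⟩, hxS⟩ := hx
    refine Set.mem_iUnion.2 ⟨j, ?_⟩
    simp only [Set.mem_setOf_eq] at hxS ⊢
    refine hxS.trans (one_div_le_one_div_of_le (by positivity) ?_)
    have : (n:ℝ) ≤ (n':ℝ) := Nat.cast_le.2 hnn
    linarith
  have hBcap : ν (⋂ n, B n) = 0 := by
    refine measure_mono_null ?_ (measure_iUnion_null
      (fun j : Fin m × {k : ℤ // k ∈ Finset.Icc (-(K:ℤ)-1) ((K:ℤ)+1)} => hnull j.1 j.2))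
    intro x hx
    simp only [Set.mem_iInter] at hx
    choose jf hjf using fun n => Set.mem_iUnion.1 (hx n)
    obtain ⟨j₀, hj₀⟩ := Finite.exists_infinite_fiber jf
    have hj₀' : Set.Infinite (jf ⁻¹' {j₀}) := Set.infinite_coe_iff.1 hj₀
    have hvz : x j₀.1 - (o + ((j₀.2 : ℤ):ℝ)*h) = 0 := by
      by_contra hvne
      obtain ⟨n1, hn1⟩ := exists_nat_one_div_lt (abs_pos.2 hvne)
      obtain ⟨n2, hn2mem, hn2⟩ := hj₀'.exists_gt n1
      have hle := hjf n2
      rw [show jf n2 = j₀ from hn2mem] at hle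
      simp only [Set.mem_setOf_eq] at hle
      have hmono : (1:ℝ)/((n2:ℝ)+1) ≤ 1/((n1:ℝ)+1) := by
        refine one_div_le_one_div_of_le (by positivity) ?_
        have : (n1:ℝ) ≤ (n2:ℝ) := Nat.cast_le.2 hn2.le
        linarith
      linarith
    exact Set.mem_iUnion.2 ⟨j₀, by simpa [sub_eq_zero] using hvz⟩
  have htend : Filter.Tendsto (fun n => ν (B n)) Filter.atTop (nhds 0) := by
    have h1 := tendsto_measure_iInter_atTop (μ := ν)
      (fun n => (hBmeas n).nullMeasurableSet) hBanti ⟨0, measure_ne_top _ _⟩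
    rwa [hBcap] at h1
  obtain ⟨n, hn⟩ := (htend.eventually_lt_const
    (show (0:ℝ≥0∞) < ENNReal.ofReal (δ/(8*(4*W^2+1))) from
      ENNReal.ofReal_pos.2 (by positivity))).exists
  have hνB : (ν (B n)).toReal ≤ δ/(8*(4*W^2+1)) :=
    ENNReal.toReal_le_of_le_ofReal (by positivity) hn.le
  set s := (n:ℝ)+1 with hsdef
  have hs : (0:ℝ) < s := by positivity
  -- the grid and the network
  set a : (∀ _i : Fin m, {k : ℤ // k ∈ Finset.Icc (-(K:ℤ)) (K:ℤ)}) → Fin m → ℝ :=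
    fun p i => o + ((p i : ℤ):ℝ)*h with ha
  set cen : (∀ _i : Fin m, {k : ℤ // k ∈ Finset.Icc (-(K:ℤ)) (K:ℤ)}) →
      EuclideanSpace ℝ (Fin m) := fun p => WithLp.toLp 2 (fun i => a p i + h/2 : Fin m → ℝ) with hcen
  set w : (∀ _i : Fin m, {k : ℤ // k ∈ Finset.Icc (-(K:ℤ)) (K:ℤ)}) → ℝ :=
    fun p => g (cen p) with hw
  set F : EuclideanSpace ℝ (Fin m) → ℝ :=
    fun x => ∑ p, w p * s0bump m s h (a p) x with hF
  refine ⟨F, by rw [hF]; exact s0_isNet s h a w, ?_⟩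
  -- basic cell estimates
  have fl1 : ∀ (x : EuclideanSpace ℝ (Fin m)) (i : Fin m),
      o + ((⌊(x i - o)/h⌋ : ℤ):ℝ)*h ≤ x i := by
    intro x i
    have h1 := Int.floor_le ((x i - o)/h)
    have h2 := mul_le_mul_of_nonneg_right h1 hh.le
    rw [div_mul_cancel₀ _ hh.ne'] at h2
    linarith
  have fl2 : ∀ (x : EuclideanSpace ℝ (Fin m)) (i : Fin m),
      x i < o + (((⌊(x i - o)/h⌋ : ℤ):ℝ)+1)*h := by
    intro x i
    have h1 := Int.lt_floor_add_one ((x i - o)/h)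
    have h2 := mul_lt_mul_of_pos_right h1 hh
    rw [div_mul_cancel₀ _ hh.ne'] at h2
    push_cast at h2 ⊢
    linarith
  have hzero : ∀ (x : EuclideanSpace ℝ (Fin m))
      (p : ∀ _i : Fin m, {k : ℤ // k ∈ Finset.Icc (-(K:ℤ)) (K:ℤ)}) (i : Fin m),
      ((p i : ℤ) ≠ ⌊(x i - o)/h⌋) → s0bump m s h (a p) x = 0 := by
    intro x p i hne
    rcases lt_or_gt_of_ne hne with hlt | hgt
    · refine s0bump_eq_zero hs.le (i := i) (Or.inr ?_)
      have hc : ((p i : ℤ):ℝ) + 1 ≤ ((⌊(x i - o)/h⌋ : ℤ):ℝ) := by exact_mod_cast hlt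
      have h3 := mul_le_mul_of_nonneg_right hc hh.le
      have h4 := fl1 x i
      simp only [ha]
      nlinarith
    · refine s0bump_eq_zero hs.le (i := i) (Or.inl ?_)
      have hc : ((⌊(x i - o)/h⌋ : ℤ):ℝ) + 1 ≤ ((p i : ℤ):ℝ) := by exact_mod_cast hgt
      have h3 := mul_le_mul_of_nonneg_right hc hh.le
      have h4 := fl2 x i
      simp only [ha]
      nlinarith
  -- global bound |F x| ≤ W
  have hbump01 : ∀ p x, |s0bump m s h (a p) x| ≤ 1 := by
    intro p x
    rw [abs_of_nonneg (s0bump_nonneg _ _ _ _ _)]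
    exact s0bump_le_one _ _ _ _ _
  have hFb : ∀ x, |F x| ≤ W := by
    intro x
    by_cases hex : ∃ p : (∀ _i : Fin m, {k : ℤ // k ∈ Finset.Icc (-(K:ℤ)) (K:ℤ)}),
        ∀ i, ((p i : ℤ) = ⌊(x i - o)/h⌋)
    · obtain ⟨p, hp⟩ := hex
      have hFx : F x = w p * s0bump m s h (a p) x := by
        rw [hF]
        refine Finset.sum_eq_single_of_mem p (Finset.mem_univ p) fun q _ hq => ?_
        have hex2 : ∃ i, (q i : ℤ) ≠ ⌊(x i - o)/h⌋ := by
          by_contra hcon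
          push_neg at hcon
          exact hq (funext fun i => Subtype.ext ((hcon i).trans (hp i).symm))
        obtain ⟨i, hi⟩ := hex2
        rw [hzero x q i hi, mul_zero]
      rw [hFx, abs_mul]
      calc |w p| * |s0bump m s h (a p) x| ≤ W * 1 :=
            mul_le_mul (hWb _) (hbump01 p x) (abs_nonneg _) hW0
        _ = W := mul_one W
    · push_neg at hex
      have hFx : F x = 0 := by
        rw [hF]
        refine Finset.sum_eq_zero fun q _ => ?_
        obtain ⟨i, hi⟩ := hex q
        rw [hzero x q i hi, mul_zero]
      rw [hFx, abs_zero]; exact hW0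
  -- pointwise estimate on the support
  have key : ∀ x ∈ Set.range e,
      |g x - F x|^2 ≤ ε'^2 + 4*W^2 * (B n).indicator (fun _ => (1:ℝ)) x := by
    intro x hx
    have hxD : x ∈ Metric.closedBall (0 : EuclideanSpace ℝ (Fin m)) ((R+2)*(m+1)) := by
      rw [Metric.mem_closedBall, dist_zero_right]
      have h1 := hnormΓ x hx
      have hm0 : (0:ℝ) ≤ (m:ℝ) := Nat.cast_nonneg m
      nlinarith
    by_cases hxB : x ∈ B n
    · rw [Set.indicator_of_mem hxB]
      have h1 : |g x - F x| ≤ 2*W := by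
        calc |g x - F x| ≤ |g x| + |F x| := abs_sub _ _
          _ ≤ W + W := add_le_add (hWb x) (hFb x)
          _ = 2*W := by ring
      calc |g x - F x|^2 ≤ (2*W)^2 := by
            have := abs_nonneg (g x - F x); nlinarith
        _ ≤ ε'^2 + 4*W^2*1 := by nlinarith [sq_nonneg ε']
    · rw [Set.indicator_of_notMem hxB]
      have hxk : ∀ i, ⌊(x i - o)/h⌋ ∈ Finset.Icc (-(K:ℤ)) (K:ℤ) := fun i =>
        Finset.mem_Icc.2 (hKprop (x i) (hcoord x hx i))
      set p₀ : (∀ _i : Fin m, {k : ℤ // k ∈ Finset.Icc (-(K:ℤ)) (K:ℤ)}) :=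
        fun i => ⟨⌊(x i - o)/h⌋, hxk i⟩ with hp₀
      have hslab : ∀ (i : Fin m) (k : ℤ), k ∈ Finset.Icc (-(K:ℤ)-1) ((K:ℤ)+1) →
          1/s < |x i - (o + (k:ℝ)*h)| := by
        intro i k hk
        by_contra hcon
        push_neg at hcon
        exact hxB (Set.mem_iUnion.2 ⟨(i, ⟨k, hk⟩), by
          simpa [hsdef] using hcon⟩)
      have hgood : ∀ i, a p₀ i + 1/s ≤ x i ∧ x i ≤ a p₀ i + h - 1/s := by
        intro i
        have hmem := hxk i
        rw [Finset.mem_Icc] at hmem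
        have hk1 : ⌊(x i - o)/h⌋ ∈ Finset.Icc (-(K:ℤ)-1) ((K:ℤ)+1) := by
          rw [Finset.mem_Icc]; omega
        have hk2 : ⌊(x i - o)/h⌋ + 1 ∈ Finset.Icc (-(K:ℤ)-1) ((K:ℤ)+1) := by
          rw [Finset.mem_Icc]; omega
        have hs1 := hslab i _ hk1
        have hs2 := hslab i _ hk2
        have hf1 := fl1 x i
        have hf2 := fl2 x i
        constructor
        · rw [abs_of_nonneg (by linarith)] at hs1
          simp only [ha, hp₀]
          linarith
        · push_cast at hs2
          rw [abs_of_neg (by nlinarith)] at hs2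
          simp only [ha, hp₀]
          nlinarith
      have hFx : F x = w p₀ := by
        rw [hF]
        calc (∑ p, w p * s0bump m s h (a p) x) = w p₀ * s0bump m s h (a p₀) x := by
              refine Finset.sum_eq_single_of_mem p₀ (Finset.mem_univ _) fun q _ hq => ?_
              have hex2 : ∃ i, (q i : ℤ) ≠ (p₀ i : ℤ) := by
                by_contra hcon
                push_neg at hcon
                exact hq (funext fun i => Subtype.ext (hcon i))
              obtain ⟨i, hi⟩ := hex2
              exact mul_eq_zero_of_right _ (hzero x q i (by simpa [hp₀] using hi))
          _ = w p₀ := by rw [s0bump_eq_one hs hgood, mul_one]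
      have hcenD : cen p₀ ∈ Metric.closedBall (0 : EuclideanSpace ℝ (Fin m))
          ((R+2)*(m+1)) := by
        rw [Metric.mem_closedBall, dist_zero_right]
        have hcoords : ∀ i, |cen p₀ i| ≤ R + 1 := by
          intro i
          have hf1 := fl1 x i
          have hf2 := fl2 x i
          have hxi := hcoord x hx i
          have habs := abs_le.1 hxi
          simp only [hcen, ha, hp₀, PiLp.toLp_apply]
          rw [abs_le]
          constructor <;> nlinarith
        have h1 := s0_norm_le (cen p₀) (by linarith : (0:ℝ) ≤ R + 1) hcoords
        have hm0 : (0:ℝ) ≤ (m:ℝ) := Nat.cast_nonneg m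
        nlinarith
      have hdist : dist x (cen p₀) < δ₀ := by
        rw [dist_eq_norm]
        have hcd : ∀ i, |(x - cen p₀) i| ≤ h := by
          intro i
          have hf1 := fl1 x i
          have hf2 := fl2 x i
          have happ : (x - cen p₀) i = x i - cen p₀ i := by simp
          rw [happ]
          simp only [hcen, ha, hp₀, PiLp.toLp_apply]
          rw [abs_le]
          constructor <;> nlinarith
        have h1 := s0_norm_le (x - cen p₀) hh.le hcd
        have h2 : ((m:ℝ)+1)*h ≤ ((m:ℝ)+1)*(δ₀/(2*((m:ℝ)+1))) :=
          mul_le_mul_of_nonneg_left hh2 (by positivity)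
        have h3 : ((m:ℝ)+1)*(δ₀/(2*((m:ℝ)+1))) = δ₀/2 := by
          field_simp
        linarith
      have hgg := huc x hxD (cen p₀) hcenD hdist
      rw [Real.dist_eq] at hgg
      have h1 : |g x - F x| ≤ ε' := by
        rw [hFx, hw]
        exact hgg.le
      have h2 : (0:ℝ) ≤ 4*W^2 * 0 := by simp
      calc |g x - F x|^2 ≤ ε'^2 := by
            have := abs_nonneg (g x - F x); nlinarith
        _ ≤ ε'^2 + 4*W^2 * 0 := by simp
  -- a.e. estimate
  have hae : ∀ᵐ x ∂ν, |f x - F x|^2 ≤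
      2*|f x - g x|^2 + (2*ε'^2 + 8*W^2 * (B n).indicator (fun _ => (1:ℝ)) x) := by
    rw [hν]
    refine (ae_restrict_iff' hΓm).2 (Filter.Eventually.of_forall fun x hx => ?_)
    have hk := key x hx
    have h1 : |f x - F x| ≤ |f x - g x| + |g x - F x| := abs_sub_le _ _ _
    nlinarith [abs_nonneg (f x - F x), abs_nonneg (f x - g x), abs_nonneg (g x - F x),
      sq_nonneg (|f x - g x| - |g x - F x|)]
  -- integrability
  have hI1 : Integrable (fun x => |f x - g x|^2) ν := by
    have h1 := (hf.sub hgmem2).integrable_norm_rpow two_ne_zero ENNReal.ofNat_ne_top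
    have h2 : (2:ℝ≥0∞).toReal = (2:ℝ) := by norm_num
    refine h1.congr (Filter.Eventually.of_forall fun x => ?_)
    simp only [h2, Pi.sub_apply, hpow]
  have hI2 : Integrable
      (fun x => 2*ε'^2 + 8*W^2 * (B n).indicator (fun _ => (1:ℝ)) x) ν := by
    refine (integrable_const _).add (Integrable.const_mul ?_ _)
    rw [integrable_indicator_iff (hBmeas n)]
    exact integrableOn_const (measure_ne_top _ _)
  have hmono := integral_mono_of_nonneg
    (Filter.Eventually.of_forall fun x => by positivity)
    ((hI1.const_mul 2).add hI2) hae
  have hRHS : ∫ x, (2*|f x - g x|^2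
        + (2*ε'^2 + 8*W^2 * (B n).indicator (fun _ => (1:ℝ)) x)) ∂ν
      = 2*(∫ x, |f x - g x|^2 ∂ν) + (2*ε'^2*T + 8*W^2*(ν (B n)).toReal) := by
    rw [integral_add (hI1.const_mul 2) hI2, integral_const_mul]
    congr 1
    rw [integral_add (integrable_const _) (Integrable.const_mul (by
      rw [integrable_indicator_iff (hBmeas n)]
      exact integrableOn_const (measure_ne_top _ _)) _)]
    rw [integral_const, integral_const_mul, integral_indicator_const _ (hBmeas n)]
    simp only [smul_eq_mul, mul_one, hTdef, measureReal_def]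
    ring
  have hInt1nn : (0:ℝ) ≤ ∫ x, |f x - g x|^2 ∂ν :=
    integral_nonneg fun x => by positivity
  have hlast : 8*W^2*(ν (B n)).toReal ≤ δ/4 := by
    have h1 : 8*W^2*(ν (B n)).toReal ≤ 8*W^2*(δ/(8*(4*W^2+1))) := by
      apply mul_le_mul_of_nonneg_left hνB (by positivity)
    have h2 : 8*W^2*(δ/(8*(4*W^2+1))) ≤ δ/4 := by
      have hq : (0:ℝ) < 8*(4*W^2+1) := by positivity
      rw [mul_div_assoc', div_le_div_iff₀ hq (by norm_num : (0:ℝ) < 4)]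
      nlinarith [mul_nonneg hδ.le (sq_nonneg W)]
    linarith
  calc ∫ x, |f x - F x|^2 ∂ν
      ≤ 2*(∫ x, |f x - g x|^2 ∂ν) + (2*ε'^2*T + 8*W^2*(ν (B n)).toReal) := by
        rw [← hRHS]; exact hmono
    _ ≤ δ := by linarith [hg2, hε'T, hlast]


/-- any `f ∈ L²(Γ, μ)`, for `Γ ⊂ ℝ^m` a compact smooth `d`-dimensional embedded
submanifold and `μ` the `d`-dimensional Hausdorff measure restricted to `Γ`, can be
`L²`-approximated to any accuracy `δ > 0` by a depth-4 ReLU network. -/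
theorem statement0 (d m : ℕ) (hd : 1 ≤ d) (hdm : d < m)
    (M : Type) [TopologicalSpace M] [ChartedSpace (EuclideanSpace ℝ (Fin d)) M]
    [IsManifold (𝓡 d) (⊤ : ℕ∞) M] [CompactSpace M]
    (e : M → EuclideanSpace ℝ (Fin m))
    (he : ContMDiff (𝓡 d) 𝓘(ℝ, EuclideanSpace ℝ (Fin m)) (⊤ : ℕ∞) e)
    (hemb : Topology.IsEmbedding e)
    (himm : ∀ p : M, Function.Injective (mfderiv (𝓡 d) 𝓘(ℝ, EuclideanSpace ℝ (Fin m)) e p))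
    (Γ : Set (EuclideanSpace ℝ (Fin m))) (hΓ : Γ = Set.range e)
    (μ : Measure (EuclideanSpace ℝ (Fin m))) (hμ : μ = μH[(d : ℝ)].restrict Γ)
    (f : EuclideanSpace ℝ (Fin m) → ℝ) (hf : MemLp f 2 μ)
    (δ : ℝ) (hδ : 0 < δ) :
    ∃ fN : EuclideanSpace ℝ (Fin m) → ℝ, IsDepth4ReLUNet fN ∧
      ∫ x, |f x - fN x| ^ 2 ∂μ ≤ δ :=
  statement0' d m hd hdm M e he Γ hΓ μ hμ f hf δ hδ
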